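/- Let G be a simple graph of order n ≥ 1 and size m, and let Ḡ denote its complement. Then M2(Ḡ) = n(n-1)³/2 - 3m(n-1)² + 2m² + (n - 3/2)·M1(G) - M2(G). -/

import Mathlib

/-- Degree of a vertex (classical, so it works for any graph on a finite vertex type). -/
noncomputable def gdeg {V : Type*} [Fintype V] (G : SimpleGraph V) (v : V) : ℕ := by
  classical exact G.degree v

/-- First Zagreb index: sum of squares of the vertex degrees. -/
noncomputable def zagrebM1 {V : Type*} [Fintype V] (G : SimpleGraph V) : ℕ :=
  ∑ v, gdeg G v ^ 2

/-- Second Zagreb index: sum of d(u)·d(v) over the edges uv. -/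
noncomputable def zagrebM2 {V : Type*} [Fintype V] (G : SimpleGraph V) : ℕ := by
  classical exact
    ∑ e ∈ G.edgeFinset,
      Sym2.lift ⟨fun u v => gdeg G u * gdeg G v, fun u v => by simp [Nat.mul_comm]⟩ e

/-- The size (number of edges) of a graph. -/
noncomputable def gsize {V : Type*} [Fintype V] (G : SimpleGraph V) : ℕ := by
  classical exact G.edgeFinset.card

/-- A graph is `r`-regular if every vertex has degree `r`. -/
def gregOfDeg {V : Type*} [Fintype V] (G : SimpleGraph V) (r : ℕ) : Prop :=
  ∀ v, gdeg G v = r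

/-- A graph is regular if all its vertices have the same degree. -/
def gregular {V : Type*} [Fintype V] (G : SimpleGraph V) : Prop :=
  ∃ r, gregOfDeg G r

section Aux

variable {V : Type*} [Fintype V]

lemma gdeg_eq (G : SimpleGraph V) [DecidableRel G.Adj] (v : V) : gdeg G v = G.degree v := by
  unfold gdeg SimpleGraph.degree
  congr!

lemma gsize_eq (G : SimpleGraph V) [DecidableRel G.Adj] : gsize G = G.edgeFinset.card := by
  unfold gsize SimpleGraph.edgeFinset
  congr!

lemma zagrebM2_eq (G : SimpleGraph V) [DecidableRel G.Adj] :
    zagrebM2 G = ∑ e ∈ G.edgeFinset,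
      Sym2.lift ⟨fun u v => G.degree u * G.degree v, fun u v => by simp [Nat.mul_comm]⟩ e := by
  unfold zagrebM2
  have h : ∀ (e : Sym2 V),
      Sym2.lift ⟨fun u v => gdeg G u * gdeg G v, fun u v => by simp [Nat.mul_comm]⟩ e
      = Sym2.lift ⟨fun u v => G.degree u * G.degree v, fun u v => by simp [Nat.mul_comm]⟩ e := by
    intro e
    induction e with
    | _ u v => simp [gdeg_eq]
  exact Finset.sum_congr (by congr!) fun e _ => h e

lemma dart_sum (G : SimpleGraph V) [DecidableRel G.Adj] (F : Sym2 V → ℚ) :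
    ∑ d : G.Dart, F d.edge = 2 * ∑ e ∈ G.edgeFinset, F e := by
  classical
  rw [← Finset.sum_fiberwise_of_maps_to (g := SimpleGraph.Dart.edge) (t := G.edgeFinset)
      (fun d _ => by simp [SimpleGraph.Dart.edge_mem]) (fun d => F d.edge)]
  rw [Finset.mul_sum]
  refine Finset.sum_congr rfl fun e he => ?_
  have hcongr : ∀ d ∈ Finset.univ.filter (fun d : G.Dart => d.edge = e), F d.edge = F e := by
    intro d hd
    rw [(Finset.mem_filter.1 hd).2]
  rw [Finset.sum_congr rfl hcongr, Finset.sum_const,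
    G.dart_edge_fiber_card e (by simpa using he), nsmul_eq_mul]
  norm_num

lemma dart_pair (G : SimpleGraph V) [DecidableRel G.Adj] (f : V → V → ℚ) :
    ∑ d : G.Dart, f d.fst d.snd = ∑ x, ∑ y ∈ G.neighborFinset x, f x y := by
  classical
  have hsig : (∑ x, ∑ y ∈ G.neighborFinset x, f x y)
      = ∑ p ∈ Finset.univ.sigma (fun x => G.neighborFinset x), f p.1 p.2 :=
    (Finset.sum_sigma Finset.univ (fun x => G.neighborFinset x)
      (fun p => f p.1 p.2)).symm
  rw [hsig]
  refine Finset.sum_bij' (s := (Finset.univ : Finset G.Dart))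
    (t := Finset.univ.sigma fun x => G.neighborFinset x)
    (f := fun d => f d.fst d.snd) (g := fun p => f p.1 p.2)
    (i := fun (d : G.Dart) (_ : d ∈ Finset.univ) =>
      (⟨d.fst, d.snd⟩ : Σ _ : V, V))
    (j := fun (p : Σ _ : V, V) (hp : p ∈ Finset.univ.sigma fun x => G.neighborFinset x) =>
      (⟨(p.1, p.2), by simpa using (Finset.mem_sigma.1 hp).2⟩ : G.Dart))
    ?_ ?_ ?_ ?_ ?_ <;> simp

lemma zagreb2_pair (G : SimpleGraph V) [DecidableRel G.Adj] :
    2 * (zagrebM2 G : ℚ)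
      = ∑ x, ∑ y ∈ G.neighborFinset x, (G.degree x : ℚ) * (G.degree y : ℚ) := by
  have h0 : (zagrebM2 G : ℚ) = ∑ e ∈ G.edgeFinset,
      Sym2.lift ⟨fun u v => (G.degree u : ℚ) * (G.degree v : ℚ),
        fun u v => by simp [mul_comm]⟩ e := by
    rw [zagrebM2_eq, Nat.cast_sum]
    refine Finset.sum_congr rfl fun e _ => ?_
    induction e with
    | _ u v => simp
  rw [h0, ← dart_sum, ← dart_pair G (fun x y => (G.degree x : ℚ) * (G.degree y : ℚ))]
  refine Finset.sum_congr rfl fun d _ => ?_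
  rcases d with ⟨⟨u, v⟩, h⟩
  simp [SimpleGraph.Dart.edge]

lemma nbr_swap (G : SimpleGraph V) [DecidableRel G.Adj] (g : V → ℚ) :
    ∑ x, ∑ y ∈ G.neighborFinset x, g y = ∑ x, (G.degree x : ℚ) * g x := by
  rw [← dart_pair G (fun _ y => g y)]
  have hsw : ∑ d : G.Dart, g d.snd = ∑ d : G.Dart, g d.fst :=
    Fintype.sum_bijective _ (SimpleGraph.Dart.symm_involutive (G := G)).bijective _ _
      (fun d => rfl)
  rw [hsw, dart_pair G (fun x _ => g x)]
  refine Finset.sum_congr rfl fun x _ => ?_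
  rw [Finset.sum_const, SimpleGraph.card_neighborFinset_eq_degree, nsmul_eq_mul]

end Aux

/-- `M2(Ḡ) = n(n-1)³/2 - 3m(n-1)² + 2m² + (n - 3/2)·M1(G) - M2(G)`. -/
theorem stmt_3 {V : Type*} [Fintype V] (G : SimpleGraph V) (n m : ℕ)
    (hn : n = Fintype.card V) (hn1 : 1 ≤ n) (hm : m = gsize G) :
    (zagrebM2 Gᶜ : ℚ) =
      (n : ℚ) * (n - 1) ^ 3 / 2 - 3 * m * (n - 1) ^ 2 + 2 * m ^ 2 +
        ((n : ℚ) - 3 / 2) * zagrebM1 G - zagrebM2 G := by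
  classical
  set d : V → ℚ := fun v => (G.degree v : ℚ) with hd_def
  set T : V → ℚ := fun x => ∑ y ∈ G.neighborFinset x, d y with hT_def
  have hcard : (Fintype.card V : ℚ) = (n : ℚ) := by rw [hn]
  have hone : 1 ≤ Fintype.card V := hn ▸ hn1
  -- complement degrees
  have hdc : ∀ v : V, ((Gᶜ.degree v : ℚ)) = (n : ℚ) - 1 - d v := by
    intro v
    rw [SimpleGraph.degree_compl]
    have h1 : G.degree v ≤ Fintype.card V - 1 :=
      Nat.le_sub_one_of_lt (G.degree_lt_card_verts v)
    rw [Nat.cast_sub h1, Nat.cast_sub hone, hcard]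
    norm_num
    rw [hd_def]
  -- complement neighborhoods
  have hnbrc : ∀ x : V, Gᶜ.neighborFinset x = Finset.univ \ insert x (G.neighborFinset x) := by
    intro x
    ext y
    simp only [SimpleGraph.mem_neighborFinset, SimpleGraph.compl_adj, Finset.mem_sdiff,
      Finset.mem_univ, true_and, Finset.mem_insert]
    constructor
    · rintro ⟨hne, hnadj⟩ (rfl | h) <;> simp_all
    · intro h
      push_neg at h
      exact ⟨fun hxy => h.1 hxy.symm, h.2⟩
  have hsumc : ∀ g : V → ℚ, ∀ x : V, ∑ y ∈ Gᶜ.neighborFinset x, g y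
      = (∑ y, g y) - g x - ∑ y ∈ G.neighborFinset x, g y := by
    intro g x
    rw [hnbrc x, Finset.sum_sdiff_eq_sub (Finset.subset_univ _),
      Finset.sum_insert (by simp)]
    ring
  -- basic quantities
  have hA : ∑ v, d v = 2 * (m : ℚ) := by
    have := G.sum_degrees_eq_twice_card_edges
    have hmm : m = G.edgeFinset.card := by rw [hm, gsize_eq]
    have : ((∑ v, G.degree v : ℕ) : ℚ) = ((2 * G.edgeFinset.card : ℕ) : ℚ) := by rw [this]
    push_cast at this
    rw [hd_def]
    rw [this, hmm]
  have hB : ∑ v, d v ^ 2 = (zagrebM1 G : ℚ) := by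
    unfold zagrebM1
    rw [Nat.cast_sum]
    refine Finset.sum_congr rfl fun v _ => ?_
    rw [gdeg_eq]
    push_cast
    rfl
  have hR : ∑ x, T x = ∑ x, d x ^ 2 := by
    rw [hT_def]
    simp only [nbr_swap G d]
    refine Finset.sum_congr rfl fun x _ => ?_
    rw [hd_def]
    ring
  have hP : ∑ x, d x * T x = 2 * (zagrebM2 G : ℚ) := by
    rw [zagreb2_pair]
    refine (Finset.sum_congr rfl fun x _ => ?_).symm
    rw [hT_def, Finset.mul_sum]
  -- sum over neighbors of complement-degree function
  set g : V → ℚ := fun v => (n : ℚ) - 1 - d v with hg_def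
  have hTg : ∀ x : V, ∑ y ∈ G.neighborFinset x, g y = ((n : ℚ) - 1) * d x - T x := by
    intro x
    rw [hg_def]
    simp only [Finset.sum_sub_distrib, Finset.sum_const,
      SimpleGraph.card_neighborFinset_eq_degree, nsmul_eq_mul, hT_def]
    rw [hd_def]
    ring
  have hSg : ∑ y, g y = (n : ℚ) * ((n : ℚ) - 1) - 2 * (m : ℚ) := by
    rw [hg_def]
    simp only [Finset.sum_sub_distrib, Finset.sum_const, Finset.card_univ, nsmul_eq_mul, hA,
      hcard]
    ring
  -- the master identity for the complement
  have hmain : 2 * (zagrebM2 Gᶜ : ℚ)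
      = ∑ x, g x * (((n : ℚ) * ((n : ℚ) - 1) - 2 * (m : ℚ)) - g x
          - (((n : ℚ) - 1) * d x - T x)) := by
    rw [zagreb2_pair Gᶜ]
    refine Finset.sum_congr rfl fun x _ => ?_
    have : ∑ y ∈ Gᶜ.neighborFinset x, (Gᶜ.degree x : ℚ) * (Gᶜ.degree y : ℚ)
        = g x * ∑ y ∈ Gᶜ.neighborFinset x, g y := by
      rw [Finset.mul_sum]
      refine Finset.sum_congr rfl fun y _ => ?_
      rw [hdc, hdc]
    rw [this, hsumc g x, hSg, hTg x]
  -- expand the summand as a polynomial in `d x`, `T x`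
  have hexp : ∀ x : V, g x * (((n : ℚ) * ((n : ℚ) - 1) - 2 * (m : ℚ)) - g x
          - (((n : ℚ) - 1) * d x - T x))
      = (((n : ℚ) - 1) * ((n : ℚ) * ((n : ℚ) - 1) - 2 * (m : ℚ) - ((n : ℚ) - 1)))
        + (((n : ℚ) - 1) - ((n : ℚ) - 1) ^ 2
            - ((n : ℚ) * ((n : ℚ) - 1) - 2 * (m : ℚ) - ((n : ℚ) - 1))) * d x
        + (((n : ℚ) - 1) - 1) * d x ^ 2
        + ((n : ℚ) - 1) * T x
        + (-1) * (d x * T x) := by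
    intro x
    rw [hg_def]
    ring
  have hmain2 : 2 * (zagrebM2 Gᶜ : ℚ)
      = (Fintype.card V : ℚ)
          * (((n : ℚ) - 1) * ((n : ℚ) * ((n : ℚ) - 1) - 2 * (m : ℚ) - ((n : ℚ) - 1)))
        + (((n : ℚ) - 1) - ((n : ℚ) - 1) ^ 2
            - ((n : ℚ) * ((n : ℚ) - 1) - 2 * (m : ℚ) - ((n : ℚ) - 1))) * (∑ x, d x)
        + (((n : ℚ) - 1) - 1) * (∑ x, d x ^ 2)
        + ((n : ℚ) - 1) * (∑ x, T x)
        + (-1) * (∑ x, d x * T x) := by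
    rw [hmain, Finset.sum_congr rfl fun x _ => hexp x]
    simp only [Finset.sum_add_distrib, Finset.sum_const, Finset.card_univ, nsmul_eq_mul,
      ← Finset.mul_sum]
  rw [hA, hR, hB, hP, hcard] at hmain2
  linear_combination hmain2 / 2
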